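/- Let S and 𝒜 be finite nonempty sets with transition kernel P, reward r, discount γ ∈ (0,1). Let π be a strictly positive policy with value function V satisfying its Bellman equation, and let A(s,a) = r(s,a) + γ ∑_{s'} P(s'|s,a) V(s') − V(s) be its advantage. Let c : S × 𝒜 → ℝ be strictly positive with c(s,a) ≥ 1 whenever A(s,a) > 0 and c(s,a) ≤ 1 whenever A(s,a) < 0, and define the policy π'(a|s) = c(s,a) π(a|s) / ∑_{b} c(s,b) π(b|s). If V' is the value function of π' (satisfying its Bellman equation), then V'(s) ≥ V(s) for all s ∈ S. (Policy improvement of the EMDA-reweighted policy, part of Lemma B.1.) -/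
import Mathlib


/-- Policy improvement of the EMDA-reweighted policy (part of Lemma B.1): if the
strictly positive policy `π` with value `V` is reweighted by multipliers `c` that are
`≥ 1` on positive-advantage actions and `≤ 1` on negative-advantage actions (and then
renormalized), the value function `V'` of the new policy `π'` satisfies `V' ≥ V`. -/
theorem emda_reweighted_policy_improvement
    {S 𝒜 : Type*} [Fintype S] [Fintype 𝒜] [Nonempty S] [Nonempty 𝒜]
    (P : S → 𝒜 → S → ℝ) (r : S → 𝒜 → ℝ) (γ : ℝ)
    (hγ0 : 0 < γ) (hγ1 : γ < 1)
    (hPnn : ∀ s a s', 0 ≤ P s a s') (hPsum : ∀ s a, ∑ s', P s a s' = 1)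
    (π : S → 𝒜 → ℝ)
    (hπpos : ∀ s a, 0 < π s a) (hπsum : ∀ s, ∑ a, π s a = 1)
    (V : S → ℝ)
    (hV : ∀ s, V s = ∑ a, π s a * (r s a + γ * ∑ s', P s a s' * V s'))
    (A : S → 𝒜 → ℝ)
    (hA : ∀ s a, A s a = r s a + γ * ∑ s', P s a s' * V s' - V s)
    (c : S → 𝒜 → ℝ)
    (hcpos : ∀ s a, 0 < c s a)
    (hcup : ∀ s a, 0 < A s a → 1 ≤ c s a)
    (hcdown : ∀ s a, A s a < 0 → c s a ≤ 1)
    (π' : S → 𝒜 → ℝ)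
    (hπ' : ∀ s a, π' s a = c s a * π s a / ∑ b, c s b * π s b)
    (V' : S → ℝ)
    (hV' : ∀ s, V' s = ∑ a, π' s a * (r s a + γ * ∑ s', P s a s' * V' s')) :
    ∀ s, V s ≤ V' s := by

  classical
  -- normalizer is positive
  have hZpos : ∀ s, 0 < ∑ b, c s b * π s b := by
    intro s
    exact Finset.sum_pos (fun b _ => mul_pos (hcpos s b) (hπpos s b)) ⟨Classical.arbitrary 𝒜, Finset.mem_univ _⟩
  have hπ'nn : ∀ s a, 0 ≤ π' s a := by
    intro s a
    rw [hπ' s a]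
    exact div_nonneg (le_of_lt (mul_pos (hcpos s a) (hπpos s a))) (le_of_lt (hZpos s))
  have hπ'sum : ∀ s, ∑ a, π' s a = 1 := by
    intro s
    have : ∑ a, π' s a = (∑ a, c s a * π s a) / ∑ b, c s b * π s b := by
      rw [Finset.sum_div]
      exact Finset.sum_congr rfl fun a _ => hπ' s a
    rw [this, div_self (ne_of_gt (hZpos s))]
  -- expected advantage of π is zero
  have hAzero : ∀ s, ∑ a, π s a * A s a = 0 := by
    intro s
    have : ∑ a, π s a * A s a
        = (∑ a, π s a * (r s a + γ * ∑ s', P s a s' * V s')) - ∑ a, π s a * V s := by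
      rw [← Finset.sum_sub_distrib]
      exact Finset.sum_congr rfl fun a _ => by rw [hA]; ring
    rw [this, ← hV s, ← Finset.sum_mul, hπsum s, one_mul, sub_self]
  -- expected advantage of π' is nonnegative
  have hAdv : ∀ s, 0 ≤ ∑ a, π' s a * A s a := by
    intro s
    have h1 : ∑ a, π' s a * A s a = (∑ a, c s a * π s a * A s a) / ∑ b, c s b * π s b := by
      rw [Finset.sum_div]
      exact Finset.sum_congr rfl fun a _ => by rw [hπ' s a]; ring
    have h2 : (0:ℝ) ≤ ∑ a, c s a * π s a * A s a := by
      have hterm : ∀ a ∈ Finset.univ, π s a * A s a ≤ c s a * π s a * A s a := by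
        intro a _
        rcases lt_trichotomy (A s a) 0 with h | h | h
        · have hc := hcdown s a h
          have h3 : 0 ≤ (1 - c s a) * (π s a * (-A s a)) :=
            mul_nonneg (by linarith) (mul_nonneg (le_of_lt (hπpos s a)) (by linarith))
          nlinarith [h3]
        · rw [h]; simp
        · have hc := hcup s a h
          have h3 : 0 ≤ (c s a - 1) * (π s a * A s a) :=
            mul_nonneg (by linarith) (mul_nonneg (le_of_lt (hπpos s a)) (le_of_lt h))
          nlinarith [h3]
      calc (0:ℝ) = ∑ a, π s a * A s a := (hAzero s).symm
        _ ≤ ∑ a, c s a * π s a * A s a := Finset.sum_le_sum hterm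
    rw [h1]
    exact div_nonneg h2 (le_of_lt (hZpos s))
  -- key identity / inequality
  have key : ∀ s, γ * ∑ a, π' s a * ∑ s', P s a s' * (V' s' - V s') ≤ V' s - V s := by
    intro s
    have hsum1 : ∑ a, π' s a * V s = V s := by
      rw [← Finset.sum_mul, hπ'sum s, one_mul]
    have eq1 : V' s - V s = (∑ a, π' s a * A s a)
        + γ * ∑ a, π' s a * ∑ s', P s a s' * (V' s' - V s') := by
      have hterm : ∀ a ∈ Finset.univ,
          π' s a * (r s a + γ * ∑ s', P s a s' * V' s')
            = π' s a * A s a + γ * (π' s a * ∑ s', P s a s' * (V' s' - V s'))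
              + π' s a * V s := by
        intro a _
        have hsplit : ∑ s', P s a s' * (V' s' - V s')
            = (∑ s', P s a s' * V' s') - ∑ s', P s a s' * V s' := by
          rw [← Finset.sum_sub_distrib]
          exact Finset.sum_congr rfl fun s' _ => by ring
        rw [hA, hsplit]; ring
      rw [hV' s, Finset.sum_congr rfl hterm, Finset.sum_add_distrib, Finset.sum_add_distrib,
        hsum1, ← Finset.mul_sum]
      ring
    have := hAdv s
    linarith
  -- minimum argument
  obtain ⟨s₀, _, hmin⟩ := Finset.exists_min_image Finset.univ (fun s => V' s - V s)
    ⟨Classical.arbitrary S, Finset.mem_univ _⟩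
  set m := V' s₀ - V s₀ with hm
  have hmle : ∀ s, m ≤ V' s - V s := fun s => hmin s (Finset.mem_univ s)
  have hinner : ∀ a, m ≤ ∑ s', P s₀ a s' * (V' s' - V s') := by
    intro a
    calc m = ∑ s', P s₀ a s' * m := by rw [← Finset.sum_mul, hPsum s₀ a, one_mul]
      _ ≤ ∑ s', P s₀ a s' * (V' s' - V s') :=
        Finset.sum_le_sum fun s' _ => mul_le_mul_of_nonneg_left (hmle s') (hPnn s₀ a s')
  have houter : m ≤ ∑ a, π' s₀ a * ∑ s', P s₀ a s' * (V' s' - V s') := by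
    calc m = ∑ a, π' s₀ a * m := by rw [← Finset.sum_mul, hπ'sum s₀, one_mul]
      _ ≤ _ := Finset.sum_le_sum fun a _ => mul_le_mul_of_nonneg_left (hinner a) (hπ'nn s₀ a)
  have hgm : γ * m ≤ m := by
    calc γ * m ≤ γ * ∑ a, π' s₀ a * ∑ s', P s₀ a s' * (V' s' - V s') :=
          mul_le_mul_of_nonneg_left houter (le_of_lt hγ0)
      _ ≤ V' s₀ - V s₀ := key s₀
      _ = m := rfl
  have hm0 : 0 ≤ m := by nlinarith
  intro s
  have := hmle s
  linarith
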